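/- Let M_v be a symmetric real n×n matrix, M_e an invertible real m×m matrix, F : ℝ → ℝ^{n×m} any matrix-valued function, and 𝟙 ∈ ℝᵐ the all-ones vector. Suppose v : ℝ → ℝⁿ and e : ℝ → ℝᵐ are differentiable and satisfy M_v v'(t) = −F(t)·𝟙 and M_e e'(t) = F(t)ᵀ v(t) (the semidiscrete momentum and energy conservation laws without gravity). Then the total discrete energy E(t) = ½ v(t)ᵀ M_v v(t) + 𝟙ᵀ M_e e(t) is constant in t. -/

import Mathlib

open Matrix

private lemma hasDerivAt_dot_mulVec {n m : ℕ}
    (A : Matrix (Fin n) (Fin m) ℝ)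
    (x dx : ℝ → Fin n → ℝ) (y dy : ℝ → Fin m → ℝ)
    (hx : ∀ t, HasDerivAt x (dx t) t) (hy : ∀ t, HasDerivAt y (dy t) t) (t : ℝ) :
    HasDerivAt (fun t => x t ⬝ᵥ (A *ᵥ y t))
      (dx t ⬝ᵥ (A *ᵥ y t) + x t ⬝ᵥ (A *ᵥ dy t)) t := by
  have key : HasDerivAt (fun t => ∑ i, ∑ j, x t i * (A i j * y t j))
      (∑ i, ∑ j, (dx t i * (A i j * y t j) + x t i * (A i j * dy t j))) t := by
    apply HasDerivAt.fun_sum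
    intro i _
    apply HasDerivAt.fun_sum
    intro j _
    have hxi : HasDerivAt (fun t => x t i) (dx t i) t := (hasDerivAt_pi.mp (hx t)) i
    have hyj : HasDerivAt (fun t => y t j) (dy t j) t := (hasDerivAt_pi.mp (hy t)) j
    exact hxi.mul (hyj.const_mul (A i j))
  have e1 : ∀ s : ℝ, ∀ u : Fin n → ℝ, ∀ w : Fin m → ℝ,
      u ⬝ᵥ (A *ᵥ w) = ∑ i, ∑ j, u i * (A i j * w j) := by
    intro s u w
    simp [dotProduct, mulVec, Finset.mul_sum]
  have e2 : (∑ i, ∑ j, (dx t i * (A i j * y t j) + x t i * (A i j * dy t j)))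
      = dx t ⬝ᵥ (A *ᵥ y t) + x t ⬝ᵥ (A *ᵥ dy t) := by
    rw [e1 t, e1 t, ← Finset.sum_add_distrib]
    exact Finset.sum_congr rfl (fun i _ => Finset.sum_add_distrib)
  rw [← e2]
  have hfun : (fun t : ℝ => x t ⬝ᵥ (A *ᵥ y t))
      = fun t => ∑ i, ∑ j, x t i * (A i j * y t j) :=
    funext fun s => e1 s (x s) (y s)
  rw [hfun]
  exact key

/-- Energy conservation for the semidiscrete Lagrangian hydrodynamics system without gravity:
if `M_v v' = −F·𝟙` and `M_e e' = Fᵀ v`, then `½ vᵀ M_v v + 𝟙ᵀ M_e e` is constant in time. -/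
theorem semidiscrete_energy_conservation {n m : ℕ}
    (Mv : Matrix (Fin n) (Fin n) ℝ) (Me : Matrix (Fin m) (Fin m) ℝ)
    (hMv : Mv.IsSymm) (hMe : IsUnit Me.det)
    (F : ℝ → Matrix (Fin n) (Fin m) ℝ)
    (v dv : ℝ → Fin n → ℝ) (e de : ℝ → Fin m → ℝ)
    (hv : ∀ t, HasDerivAt v (dv t) t)
    (he : ∀ t, HasDerivAt e (de t) t)
    (hmom : ∀ t, Mv *ᵥ dv t = -(F t *ᵥ (fun _ => 1)))
    (hen : ∀ t, Me *ᵥ de t = (F t)ᵀ *ᵥ v t) :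
    ∀ s t : ℝ,
      (1/2) * (v s ⬝ᵥ (Mv *ᵥ v s)) + (fun _ => (1:ℝ)) ⬝ᵥ (Me *ᵥ e s)
      = (1/2) * (v t ⬝ᵥ (Mv *ᵥ v t)) + (fun _ => (1:ℝ)) ⬝ᵥ (Me *ᵥ e t) := by
  set E : ℝ → ℝ := fun t =>
    (1/2) * (v t ⬝ᵥ (Mv *ᵥ v t)) + (fun _ => (1:ℝ)) ⬝ᵥ (Me *ᵥ e t) with hE
  have hconst : ∀ t, HasDerivAt E 0 t := by
    intro t
    have h1 := hasDerivAt_dot_mulVec Mv v dv v dv hv hv t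
    have h2 := hasDerivAt_dot_mulVec Me (fun _ => fun _ => (1:ℝ)) (fun _ => fun _ => (0:ℝ))
      e de (fun _ => hasDerivAt_const _ _) he t
    have hD := (h1.const_mul (1/2 : ℝ)).add h2
    have hsym : dv t ⬝ᵥ (Mv *ᵥ v t) = v t ⬝ᵥ (Mv *ᵥ dv t) := by
      rw [dotProduct_mulVec]
      nth_rewrite 1 [← hMv.eq]
      rw [vecMul_transpose, dotProduct_comm]
    have hswap : v t ⬝ᵥ (F t *ᵥ (fun _ => (1:ℝ)))
        = (fun _ => (1:ℝ)) ⬝ᵥ ((F t)ᵀ *ᵥ v t) := by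
      rw [dotProduct_mulVec, mulVec_transpose, dotProduct_comm]
    have hzero : (1/2 : ℝ) * (dv t ⬝ᵥ (Mv *ᵥ v t) + v t ⬝ᵥ (Mv *ᵥ dv t))
        + ((fun _ => (0:ℝ)) ⬝ᵥ (Me *ᵥ e t) + (fun _ => (1:ℝ)) ⬝ᵥ (Me *ᵥ de t)) = 0 := by
      rw [hsym, hmom, hen, ← hswap]
      simp [dotProduct]
      ring
    rw [hzero] at hD
    exact hD
  intro s t
  exact is_const_of_deriv_eq_zero (fun x => (hconst x).differentiableAt)
    (fun x => (hconst x).deriv) s t
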